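/- Let X be a topological space in which every nowhere dense set is countable, and let f : X → ℝ be quasicontinuous. Then the set of points of discontinuity of f is countable. -/

import Mathlib

theorem countable_discontinuity_set {X : Type*} [TopologicalSpace X]
    (hX : ∀ N : Set X, IsNowhereDense N → N.Countable)
    (f : X → ℝ)
    (hf : ∀ O : Set ℝ, IsOpen O → f ⁻¹' O ⊆ closure (interior (f ⁻¹' O))) :
    {x | ¬ ContinuousAt f x}.Countable := by
  set D : ℝ → Set X := fun ε => {x | ∀ U ∈ nhds x, ∃ y ∈ U, ∃ z ∈ U, ε ≤ |f y - f z|} with hD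
  -- each D ε with ε > 0 is nowhere dense
  have hclosed : ∀ ε : ℝ, IsClosed (D ε) := by
    intro ε
    rw [← isOpen_compl_iff, isOpen_iff_mem_nhds]
    intro x hx
    simp only [hD, Set.mem_compl_iff, Set.mem_setOf_eq, not_forall] at hx
    obtain ⟨U, hU, hU2⟩ := hx
    push_neg at hU2
    filter_upwards [interior_mem_nhds.2 hU] with y hy
    simp only [hD, Set.mem_compl_iff, Set.mem_setOf_eq, not_forall]
    refine ⟨interior U, isOpen_interior.mem_nhds hy, ?_⟩
    push_neg
    intro a ha b hb
    exact hU2 a (interior_subset ha) b (interior_subset hb)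
  have hND : ∀ ε : ℝ, 0 < ε → IsNowhereDense (D ε) := by
    intro ε hε
    rw [(hclosed ε).isNowhereDense_iff, Set.eq_empty_iff_forall_notMem]
    intro x hx
    have hO : IsOpen (Metric.ball (f x) (ε / 4)) := Metric.isOpen_ball
    have hx' : x ∈ closure (interior (f ⁻¹' Metric.ball (f x) (ε / 4))) :=
      hf _ hO (Metric.mem_ball_self (by linarith))
    have hV : interior (D ε) ∈ nhds x := isOpen_interior.mem_nhds hx
    obtain ⟨y, hy1, hy2⟩ := mem_closure_iff_nhds.1 hx' _ hV
    have hyD : y ∈ D ε := interior_subset hy1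
    have hUnhds : interior (D ε) ∩ interior (f ⁻¹' Metric.ball (f x) (ε / 4)) ∈ nhds y :=
      (isOpen_interior.inter isOpen_interior).mem_nhds ⟨hy1, hy2⟩
    obtain ⟨a, ha, b, hb, hab⟩ := hyD _ hUnhds
    have hfa : f a ∈ Metric.ball (f x) (ε / 4) := Set.mem_preimage.1 (interior_subset ha.2)
    have hfb : f b ∈ Metric.ball (f x) (ε / 4) := Set.mem_preimage.1 (interior_subset hb.2)
    rw [Metric.mem_ball, Real.dist_eq] at hfa hfb
    have : |f a - f b| < ε / 2 := by
      calc |f a - f b| ≤ |f a - f x| + |f x - f b| := abs_sub_le _ _ _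
      _ < ε / 4 + ε / 4 := by rw [abs_sub_comm (f x) (f b)]; linarith
      _ = ε / 2 := by ring
    linarith
  -- discontinuity set is contained in union of D (1/(n+1))
  have hsub : {x | ¬ ContinuousAt f x} ⊆ ⋃ n : ℕ, D (1 / (n + 1)) := by
    intro x hx
    simp only [Set.mem_setOf_eq, ContinuousAt, Metric.tendsto_nhds] at hx
    push_neg at hx
    obtain ⟨ε, hε, hfreq⟩ := hx
    obtain ⟨n, hn⟩ := exists_nat_one_div_lt hε
    refine Set.mem_iUnion.2 ⟨n, ?_⟩
    intro U hU
    obtain ⟨y, hy1, hy2⟩ := (hfreq.and_eventually (Filter.eventually_mem_set.2 hU)).exists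
    refine ⟨y, hy2, x, mem_of_mem_nhds hU, ?_⟩
    rw [Real.dist_eq] at hy1
    calc (1 : ℝ) / (n + 1) ≤ ε := le_of_lt hn
    _ ≤ |f y - f x| := hy1
  refine Set.Countable.mono hsub (Set.countable_iUnion fun n => hX _ (hND _ ?_))
  positivity
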